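/- The logarithm on 1-units is a well-defined order-preserving group isomorphism from the multiplicative group 1 + k((G^{<1})) onto the additive group (k((G^{<1})), +); in particular, for every ε ∈ k((G^{<1})) the series Σ_{i≥1} (−1)^{i−1} ε^i/i has anti well-ordered support contained in G^{<1}, the map 1+ε ↦ Σ_{i≥1} (−1)^{i−1} ε^i/i sends products to sums, is strictly order-preserving, and is bijective. -/

import Mathlib

/-! Common framework: fields of generalized power series `k((G))` over a multiplicative
linearly ordered abelian group `G`, realized as Mathlib Hahn series over the additive
order-dual of `G` (so that anti well-ordered supports in `G` become partially
well-ordered supports), with the anti-lexicographic order. -/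

noncomputable section
open HahnSeries
open scoped Classical

/-- The additive order-dual copy of the multiplicative group `G`:
anti well-ordered subsets of `G` correspond to well-ordered subsets of `gdual G`. -/
abbrev gdual (G : Type*) [CommGroup G] [LinearOrder G] [IsOrderedMonoid G] : Type _ := Additive Gᵒᵈ

/-- View an element of `G` as an exponent (element of `gdual G`). -/
def toGd {G : Type*} [CommGroup G] [LinearOrder G] [IsOrderedMonoid G] (g : G) : gdual G :=
  Additive.ofMul (OrderDual.toDual g)

/-- View an exponent (element of `gdual G`) as an element of `G`. -/
def toG {G : Type*} [CommGroup G] [LinearOrder G] [IsOrderedMonoid G] (γ : gdual G) : G :=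
  OrderDual.ofDual (Additive.toMul γ)

section HahnOrder

variable {k : Type*} [Field k] [LinearOrder k] [IsStrictOrderedRing k] {Γ' : Type*} [LinearOrder Γ']

theorem HahnSeries.leadingCoeff_of_ne {Γ R : Type*} [LinearOrder Γ] [Zero R] {x : HahnSeries Γ R}
    (hx : x ≠ 0) :
    x.leadingCoeff = x.coeff (x.isWF_support.min (HahnSeries.support_nonempty_iff.2 hx)) := by
  rw [HahnSeries.leadingCoeff_of_ne_zero hx]
  congr 1
  exact (WithTop.untop_eq_iff _).2 (HahnSeries.orderTop_of_ne_zero hx)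

theorem hahn_leadingCoeff_neg (x : HahnSeries Γ' k) : (-x).leadingCoeff = -x.leadingCoeff := by
  by_cases h : x = 0
  · simp [h]
  · have hn : (-x) ≠ 0 := neg_ne_zero.2 h
    rw [HahnSeries.leadingCoeff_of_ne h, HahnSeries.leadingCoeff_of_ne hn]
    have hmin : (-x).isWF_support.min (HahnSeries.support_nonempty_iff.2 hn)
        = x.isWF_support.min (HahnSeries.support_nonempty_iff.2 h) := by
      apply le_antisymm
      · exact Set.IsWF.min_le _ _ (by
          rw [HahnSeries.support_neg (x := x)]
          exact x.isWF_support.min_mem (HahnSeries.support_nonempty_iff.2 h))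
      · refine Set.IsWF.min_le _ _ ?_
        rw [← HahnSeries.support_neg (x := x)]
        exact (-x).isWF_support.min_mem (HahnSeries.support_nonempty_iff.2 hn)
    rw [hmin, HahnSeries.coeff_neg]

theorem hahn_leadingCoeff_add_pos {a b : HahnSeries Γ' k}
    (ha : 0 < a.leadingCoeff) (hb : 0 < b.leadingCoeff) : 0 < (a + b).leadingCoeff := by
  have key : ∀ x y : HahnSeries Γ' k, 0 < x.leadingCoeff → 0 < y.leadingCoeff →
      ∀ (hx0 : x ≠ 0) (hy0 : y ≠ 0),
      x.isWF_support.min (HahnSeries.support_nonempty_iff.2 hx0) ≤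
        y.isWF_support.min (HahnSeries.support_nonempty_iff.2 hy0) →
      0 < (x + y).leadingCoeff := by
    intro x y hx hy hx0 hy0 hle
    set mx := x.isWF_support.min (HahnSeries.support_nonempty_iff.2 hx0) with hmx
    set my := y.isWF_support.min (HahnSeries.support_nonempty_iff.2 hy0) with hmy
    have hcx : x.coeff mx = x.leadingCoeff := (HahnSeries.leadingCoeff_of_ne hx0).symm
    have hcoeff : 0 < (x + y).coeff mx := by
      rcases lt_or_eq_of_le hle with hlt | heq
      · have hny : y.coeff mx = 0 := by
          by_contra hc
          exact absurd (Set.IsWF.min_le _ _ (by rwa [HahnSeries.mem_support])) (not_le.2 hlt)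
        rw [HahnSeries.coeff_add, hny, add_zero, hcx]; exact hx
      · have hcy : y.coeff mx = y.leadingCoeff := by
          rw [heq]; exact (HahnSeries.leadingCoeff_of_ne hy0).symm
        rw [HahnSeries.coeff_add, hcx, hcy]; exact add_pos hx hy
    have hmem : mx ∈ (x + y).support := by
      rw [HahnSeries.mem_support]; exact ne_of_gt hcoeff
    have hxy0 : x + y ≠ 0 := HahnSeries.support_nonempty_iff.1 ⟨mx, hmem⟩
    have hminxy : (x + y).isWF_support.min (HahnSeries.support_nonempty_iff.2 hxy0) = mx := by
      apply le_antisymm (Set.IsWF.min_le _ _ hmem)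
      have hmm := (x + y).isWF_support.min_mem (HahnSeries.support_nonempty_iff.2 hxy0)
      rcases HahnSeries.support_add_subset _ _ hmm with hmem' | hmem'
      · exact Set.IsWF.min_le _ _ hmem'
      · exact le_trans hle (Set.IsWF.min_le _ _ hmem')
    rw [HahnSeries.leadingCoeff_of_ne hxy0, hminxy]
    exact hcoeff
  have ha0 : a ≠ 0 := by intro h; rw [h] at ha; simp at ha
  have hb0 : b ≠ 0 := by intro h; rw [h] at hb; simp at hb
  rcases le_total (a.isWF_support.min (HahnSeries.support_nonempty_iff.2 ha0))
      (b.isWF_support.min (HahnSeries.support_nonempty_iff.2 hb0)) with hle | hle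
  · exact key a b ha hb ha0 hb0 hle
  · rw [add_comm]; exact key b a hb ha hb0 ha0 hle

/-- The anti-lexicographic linear order on generalized power series:
`x` is positive iff its leading coefficient (the coefficient at the valuation `v x`,
i.e. at the largest element of the support) is positive. -/
instance instHahnLinearOrder : LinearOrder (HahnSeries Γ' k) where
  le x y := x = y ∨ 0 < (y - x).leadingCoeff
  lt x y := 0 < (y - x).leadingCoeff
  le_refl x := Or.inl rfl
  le_trans x y z hxy hyz := by
    rcases hxy with rfl | hxy
    · exact hyz
    rcases hyz with rfl | hyz
    · exact Or.inr hxy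
    · refine Or.inr ?_
      have := hahn_leadingCoeff_add_pos hyz hxy
      rwa [sub_add_sub_cancel] at this
  le_antisymm x y hxy hyx := by
    rcases hxy with rfl | hxy
    · rfl
    rcases hyx with rfl | hyx
    · rfl
    · exfalso
      have h1 : (x - y).leadingCoeff = -(y - x).leadingCoeff := by
        rw [← hahn_leadingCoeff_neg, neg_sub]
      rw [h1] at hyx
      exact absurd hxy (not_lt.2 (le_of_lt (neg_pos.1 hyx)))
  lt_iff_le_not_ge x y := by
    constructor
    · intro h
      refine ⟨Or.inr h, ?_⟩
      rintro (rfl | h')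
      · change 0 < (y - y).leadingCoeff at h
        rw [sub_self] at h
        simp at h
      · have h1 : (x - y).leadingCoeff = -(y - x).leadingCoeff := by
          rw [← hahn_leadingCoeff_neg, neg_sub]
        rw [h1] at h'
        exact absurd h (not_lt.2 (le_of_lt (neg_pos.1 h')))
    · rintro ⟨hle, hnot⟩
      rcases hle with rfl | h
      · exact absurd (Or.inl rfl) hnot
      · exact h
  le_total x y := by
    by_cases h : x = y
    · exact Or.inl (Or.inl h)
    · have h0 : y - x ≠ 0 := sub_ne_zero.2 (Ne.symm h)
      have hlc : (y - x).leadingCoeff ≠ 0 := HahnSeries.leadingCoeff_ne_zero.2 h0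
      rcases lt_or_gt_of_ne hlc with hneg | hpos
      · refine Or.inr (Or.inr ?_)
        rw [show x - y = -(y - x) from (neg_sub y x).symm, hahn_leadingCoeff_neg]
        exact neg_pos.2 hneg
      · exact Or.inl (Or.inr hpos)
  toDecidableLE := fun _ _ => Classical.dec _

/-- With the anti-lexicographic order, `k((G))` is a linearly ordered abelian group. -/
instance instHahnLOACG : IsOrderedAddMonoid (HahnSeries Γ' k) where
  add_le_add_left := by
    intro x y hxy c
    rcases hxy with rfl | h
    · exact le_refl _
    · exact Or.inr (by rwa [add_sub_add_right_eq_sub])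

theorem hahn_lt_iff (x y : HahnSeries Γ' k) : x < y ↔ 0 < (y - x).leadingCoeff := Iff.rfl

theorem hahn_single_pos (a : Γ') : (0 : HahnSeries Γ' k) < HahnSeries.single a 1 := by
  rw [hahn_lt_iff, sub_zero, HahnSeries.leadingCoeff_of_single]
  exact one_pos

theorem hahn_single_lt_single {a b : Γ'} (hab : b < a) :
    (HahnSeries.single a 1 : HahnSeries Γ' k) < HahnSeries.single b 1 := by
  rw [hahn_lt_iff]
  set δ : HahnSeries Γ' k := HahnSeries.single b 1 - HahnSeries.single a 1 with hδdef
  have hne : b ≠ a := ne_of_lt hab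
  have hb : δ.coeff b = 1 := by
    rw [hδdef, HahnSeries.coeff_sub, HahnSeries.coeff_single_same,
      HahnSeries.coeff_single_of_ne hne, sub_zero]
  have hbmem : b ∈ δ.support := by rw [HahnSeries.mem_support, hb]; exact one_ne_zero
  have hδ : δ ≠ 0 := HahnSeries.support_nonempty_iff.1 ⟨b, hbmem⟩
  have hsub : δ.support ⊆ {b, a} := by
    intro γ hγ
    rw [HahnSeries.mem_support] at hγ
    by_contra hγ'
    simp only [Set.mem_insert_iff, Set.mem_singleton_iff, not_or] at hγ'
    apply hγ
    rw [hδdef, HahnSeries.coeff_sub, HahnSeries.coeff_single_of_ne hγ'.1,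
      HahnSeries.coeff_single_of_ne hγ'.2, sub_zero]
  have hmin : δ.isWF_support.min (HahnSeries.support_nonempty_iff.2 hδ) = b := by
    have hmem := δ.isWF_support.min_mem (HahnSeries.support_nonempty_iff.2 hδ)
    have hle := δ.isWF_support.min_le (HahnSeries.support_nonempty_iff.2 hδ) hbmem
    rcases hsub hmem with h | h
    · exact h
    · exact absurd (h ▸ hle) (not_le.2 hab)
  rw [HahnSeries.leadingCoeff_of_ne hδ, hmin, hb]
  exact one_pos

end HahnOrder

section Series

variable {k : Type*} [Field k] [LinearOrder k] [IsStrictOrderedRing k] {G : Type*} [CommGroup G] [LinearOrder G] [IsOrderedMonoid G]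

/-- The summable family `n ↦ (-1)^n/(n+1) • ε^(n+1)` (`ε` of positive order). -/
def logFamily (ε : HahnSeries (gdual G) k) (hε : 0 < ε.orderTop) :
    HahnSeries.SummableFamily (gdual G) k ℕ where
  toFun n := ((-1 : k) ^ n / ((n : k) + 1)) • ε ^ (n + 1)
  isPWO_iUnion_support' := by
    refine ((HahnSeries.SummableFamily.powers ε).isPWO_iUnion_support).mono ?_
    intro γ hγ
    rw [Set.mem_iUnion] at hγ ⊢
    obtain ⟨n, hn⟩ := hγ
    refine ⟨n + 1, ?_⟩
    rw [HahnSeries.mem_support] at hn ⊢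
    rw [HahnSeries.SummableFamily.powers_of_orderTop_pos hε]
    intro h
    apply hn
    show (((-1 : k) ^ n / ((n : k) + 1)) • ε ^ (n + 1)).coeff γ = 0
    rw [HahnSeries.coeff_smul]
    show ((-1 : k) ^ n / ((n : k) + 1)) • (ε ^ (n + 1)).coeff γ = 0
    rw [show (ε ^ (n + 1)).coeff γ = 0 from h, smul_zero]
  finite_co_support' g := by
    have h := (HahnSeries.SummableFamily.powers ε).finite_co_support g
    refine Set.Finite.subset (h.preimage (Set.injOn_of_injective Nat.succ_injective)) ?_
    intro n hn
    simp only [Set.mem_preimage, Set.mem_setOf_eq] at hn ⊢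
    intro h0
    apply hn
    show (((-1 : k) ^ n / ((n : k) + 1)) • ε ^ (n + 1)).coeff g = 0
    rw [HahnSeries.coeff_smul]
    have : ((HahnSeries.SummableFamily.powers ε) (Nat.succ n)).coeff g = 0 := h0
    rw [HahnSeries.SummableFamily.powers_of_orderTop_pos hε] at this
    rw [show (ε ^ (n + 1)).coeff g = 0 from this, smul_zero]

/-- The logarithm on 1-units: `1 + ε ↦ Σ_{i ≥ 1} (-1)^(i-1) ε^i / i`
(for `ε` supported on `G^{<1}`; junk value `0` otherwise). -/
def logOneUnit (ε : HahnSeries (gdual G) k) : HahnSeries (gdual G) k :=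
  if hε : 0 < ε.orderTop then (logFamily ε hε).hsum else 0

/-- The canonical extension of an order-preserving embedding `ψ : G₁ → G₂` to the fields of
generalized power series, applying `ψ` to every monomial (junk value `0` if `ψ` is not
order-preserving). -/
def extMap {k : Type*} [Field k] [LinearOrder k] [IsStrictOrderedRing k] {G₁ G₂ : Type*} [CommGroup G₁] [LinearOrder G₁] [IsOrderedMonoid G₁]
    [CommGroup G₂] [LinearOrder G₂] [IsOrderedMonoid G₂] (ψ : G₁ → G₂) :
    HahnSeries (gdual G₁) k → HahnSeries (gdual G₂) k :=
  if h : StrictMono ψ then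
    HahnSeries.embDomain
      (OrderEmbedding.ofStrictMono (fun γ => toGd (ψ (toG γ)))
        (fun a b hab => show toGd (ψ (toG a)) < toGd (ψ (toG b)) from
          h (show toG b < toG a from hab)))
  else fun _ => 0

/-- The additive subgroup `k((G^{>1}))` of the series supported on `G^{>1}`. -/
def largeSeries (k : Type*) [Field k] [LinearOrder k] [IsStrictOrderedRing k] (G : Type*) [CommGroup G] [LinearOrder G] [IsOrderedMonoid G] :
    AddSubgroup (HahnSeries (gdual G) k) where
  carrier := {f | ∀ γ ∈ f.support, γ < (0 : gdual G)}
  zero_mem' := by intro γ hγ; rw [HahnSeries.support_zero] at hγ; exact absurd hγ (Set.notMem_empty γ)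
  add_mem' := by
    intro a b ha hb γ hγ
    rcases HahnSeries.support_add_subset _ _ hγ with h | h
    exacts [ha γ h, hb γ h]
  neg_mem' := by
    intro a ha γ hγ
    rw [HahnSeries.support_neg] at hγ
    exact ha γ hγ

theorem mem_largeSeries {f : HahnSeries (gdual G) k} :
    f ∈ largeSeries k G ↔ ∀ γ ∈ f.support, γ < (0 : gdual G) := Iff.rfl

/-- `log : (k^{>0}, ·) → (k, +)` is an order-preserving group embedding. -/
structure IsResidueLog (lg : k → k) : Prop where
  map_mul : ∀ a b : k, 0 < a → 0 < b → lg (a * b) = lg a + lg b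
  strictMonoOn : StrictMonoOn lg (Set.Ioi 0)

/-- A prelogarithmic section of `k((G))`: an order-preserving group embedding
`l : (G, ·) → (k((G^{>1})), +)`. -/
structure IsPrelogSection (l : G → HahnSeries (gdual G) k) : Prop where
  supp_large : ∀ g : G, l g ∈ largeSeries k G
  map_mul : ∀ g h : G, l (g * h) = l g + l h
  strictMono : StrictMono l

/-- The prelogarithm associated to a prelogarithmic section `l` and a logarithm `lg` on the
residue field: `L(g·a·(1+ε)) = l(g) + log(a) + Σ (-1)^(i-1) ε^i/i`. -/
def prelogL (lg : k → k) (l : G → HahnSeries (gdual G) k)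
    (α : HahnSeries (gdual G) k) : HahnSeries (gdual G) k :=
  l (toG α.order) + HahnSeries.C (lg α.leadingCoeff) +
    logOneUnit ((HahnSeries.single α.order α.leadingCoeff)⁻¹ * α - 1)

/-- The group of exponentials `G^# = e[k((G^{>1}))]`, a multiplicative copy of the ordered
additive group `k((G^{>1}))`. The element `e(α)` is `Multiplicative.ofAdd ⟨α, _⟩`. -/
abbrev Gsharp (k : Type*) [Field k] [LinearOrder k] [IsStrictOrderedRing k] (G : Type*) [CommGroup G] [LinearOrder G] [IsOrderedMonoid G] :
    Type _ := Multiplicative ↥(largeSeries k G)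

/-- The embedding `ι : G → G^#`, `ι(g) := e(l(g))`. -/
def iotaSharp (l : G → HahnSeries (gdual G) k) (hl : ∀ g, l g ∈ largeSeries k G) (g : G) :
    Gsharp k G :=
  Multiplicative.ofAdd (⟨l g, hl g⟩ : ↥(largeSeries k G))

/-- The prelogarithmic section `l^#` of `k((G^#))`: `l^#(e(α)) := ι(α)`, where
`ι : k((G)) → k((G^#))` is the canonical extension of `ι : G → G^#`. -/
def lsharpFun (l : G → HahnSeries (gdual G) k) (hl : ∀ g, l g ∈ largeSeries k G)
    (x : Gsharp k G) : HahnSeries (gdual (Gsharp k G)) k :=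
  extMap (iotaSharp l hl) ((Multiplicative.toAdd x : ↥(largeSeries k G)) : HahnSeries (gdual G) k)

/-- The induced map `ψ^# : G₁^# → G₂^#`, `ψ^#(e(α)) := e(ψ(α))` (junk value `1` if the
canonical extension of `ψ` does not map `k((G₁^{>1}))` into `k((G₂^{>1}))`). -/
def psiSharp {k : Type*} [Field k] [LinearOrder k] [IsStrictOrderedRing k] {G₁ G₂ : Type*} [CommGroup G₁] [LinearOrder G₁] [IsOrderedMonoid G₁]
    [CommGroup G₂] [LinearOrder G₂] [IsOrderedMonoid G₂] (ψ : G₁ → G₂) (x : Gsharp k G₁) : Gsharp k G₂ :=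
  if h : ∀ f ∈ largeSeries k G₁, extMap ψ f ∈ largeSeries k G₂ then
    Multiplicative.ofAdd
      (⟨extMap ψ ((Multiplicative.toAdd x : ↥(largeSeries k G₁)) : HahnSeries (gdual G₁) k),
        h _ (Multiplicative.toAdd x).2⟩ : ↥(largeSeries k G₂))
  else 1

/-- Condition (†) for subgroups `U ⊆ H` of `G`:
`l(H) < |f|` for every nonzero `f ∈ k((H^{>U}))`. -/
def CondDagger (l : G → HahnSeries (gdual G) k) (U H : Subgroup G) : Prop :=
  ∀ h ∈ H, ∀ f : HahnSeries (gdual G) k, f ≠ 0 →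
    (∀ γ ∈ f.support, toG γ ∈ H ∧ ∀ u ∈ U, u < toG γ) → l h < |f|

/-- The growth axiom for a subgroup `H` of `G`:
`l(H) < |f|` for every nonzero `f ∈ k((H^{>1}))`. -/
def GrowthAxiom (l : G → HahnSeries (gdual G) k) (H : Subgroup G) : Prop :=
  CondDagger l (⊥ : Subgroup G) H

theorem mem_large_of_gt {f : HahnSeries (gdual G) k} {U H : Subgroup G}
    (hf : ∀ γ ∈ f.support, toG γ ∈ H ∧ ∀ u ∈ U, u < toG γ) : f ∈ largeSeries k G :=
  fun γ hγ => show (1 : G) < toG γ from (hf γ hγ).2 1 U.one_mem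

/-- The set `H^{#,U} = ι(H)·e[k((H^{>U}))] ⊆ G^#`. -/
def sharpProdSet (l : G → HahnSeries (gdual G) k) (hl : ∀ g, l g ∈ largeSeries k G)
    (U H : Subgroup G) : Set (Gsharp k G) :=
  {x | ∃ h ∈ H, ∃ f : HahnSeries (gdual G) k,
    ∃ hf : ∀ γ ∈ f.support, toG γ ∈ H ∧ ∀ u ∈ U, u < toG γ,
    x = iotaSharp l hl h *
      Multiplicative.ofAdd (⟨f, mem_large_of_gt hf⟩ : ↥(largeSeries k G))}

end Series

section Hahn

variable (k : Type*) [Field k] [LinearOrder k] [IsStrictOrderedRing k] {Γ : Type*} [LinearOrder Γ]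

/-- The Hahn group `Γ^k` of formal products `∏_γ x_γ^(g γ)` with anti well-ordered support,
ordered anti-lexicographically, realized as the multiplicative copy of the additive group of
Hahn series over `Γᵒᵈ` with coefficients in `k`. -/
abbrev HahnGroup (Γ : Type*) [LinearOrder Γ] (k : Type*) [Field k] [LinearOrder k] [IsStrictOrderedRing k] : Type _ :=
  Multiplicative (HahnSeries Γᵒᵈ k)

/-- The monomial `x_γ` in the Hahn group `Γ^k`. -/
def xMon (γ : Γ) : HahnGroup Γ k :=
  Multiplicative.ofAdd (HahnSeries.single (OrderDual.toDual γ) (1 : k))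

/-- The prelogarithmic section `l_σ` on `k((Γ^k))` induced by `σ : Γ → Γ`:
`l_σ(∏_γ x_γ^(g γ)) := Σ_γ (g γ)·x_(σ γ)` (junk value `0` if `σ` is not strictly
order-preserving). -/
def sigmaSection (σ : Γ → Γ) :
    HahnGroup Γ k → HahnSeries (gdual (HahnGroup Γ k)) k :=
  if hσ : StrictMono σ then fun g =>
    HahnSeries.embDomain
      (OrderEmbedding.ofStrictMono
        (fun γ : Γᵒᵈ => toGd (xMon k (σ (OrderDual.ofDual γ))))
        (fun a b hab =>
          show toGd (xMon k (σ (OrderDual.ofDual a))) < toGd (xMon k (σ (OrderDual.ofDual b)))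
          from hahn_single_lt_single
            (show OrderDual.toDual (σ (OrderDual.ofDual a)) <
                OrderDual.toDual (σ (OrderDual.ofDual b)) from
              hσ (show OrderDual.ofDual b < OrderDual.ofDual a from hab))))
      (Multiplicative.toAdd g)
  else fun _ => 0

/-- The lift `ψ_σ : Γ^k → Γ^k` of `σ : Γ → Γ`, `ψ_σ(∏_γ x_γ^(g γ)) := ∏_γ x_(σ γ)^(g γ)`
(junk value `id` if `σ` is not strictly order-preserving). -/
def sigmaAuto (σ : Γ → Γ) : HahnGroup Γ k → HahnGroup Γ k :=
  if hσ : StrictMono σ then fun g =>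
    Multiplicative.ofAdd
      (HahnSeries.embDomain
        (OrderEmbedding.ofStrictMono
          (fun γ : Γᵒᵈ => OrderDual.toDual (σ (OrderDual.ofDual γ)))
          (fun a b hab =>
            show OrderDual.toDual (σ (OrderDual.ofDual a)) <
                OrderDual.toDual (σ (OrderDual.ofDual b)) from
              hσ (show OrderDual.ofDual b < OrderDual.ofDual a from hab)))
        (Multiplicative.toAdd g))
  else id

end Hahn

namespace AuxLog

open HahnSeries HahnSeries.SummableFamily


variable {k : Type*} [Field k] [LinearOrder k] [IsStrictOrderedRing k] {Γ : Type*} [AddCommMonoid Γ] [LinearOrder Γ] [IsOrderedCancelAddMonoid Γ]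

/-- positive support -/
def PosSupp (x : HahnSeries Γ k) : Prop := ∀ γ ∈ x.support, 0 < γ

def NNSupp (x : HahnSeries Γ k) : Prop := ∀ γ ∈ x.support, 0 ≤ γ

theorem nnSupp_of_pos {x : HahnSeries Γ k} (h : PosSupp x) : NNSupp x :=
  fun γ hγ => le_of_lt (h γ hγ)

theorem nnSupp_one : NNSupp (1 : HahnSeries Γ k) := by
  intro γ hγ
  rw [HahnSeries.support_one] at hγ
  simp_all

theorem posSupp_mul {x y : HahnSeries Γ k} (hx : PosSupp x) (hy : NNSupp y) :
    PosSupp (x * y) := by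
  intro γ hγ
  obtain ⟨a, ha, b, hb, rfl⟩ := HahnSeries.support_mul_subset hγ
  exact add_pos_of_pos_of_nonneg (hx a ha) (hy b hb)

theorem nnSupp_mul {x y : HahnSeries Γ k} (hx : NNSupp x) (hy : NNSupp y) :
    NNSupp (x * y) := by
  intro γ hγ
  obtain ⟨a, ha, b, hb, rfl⟩ := HahnSeries.support_mul_subset hγ
  exact add_nonneg (hx a ha) (hy b hb)

theorem nnSupp_pow {x : HahnSeries Γ k} (hx : NNSupp x) (n : ℕ) : NNSupp (x ^ n) := by
  induction n with
  | zero => simpa using nnSupp_one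
  | succ m ih => rw [pow_succ]; exact nnSupp_mul ih hx

theorem posSupp_pow {x : HahnSeries Γ k} (hx : PosSupp x) (n : ℕ) :
    PosSupp (x ^ (n + 1)) := by
  rw [pow_succ']
  exact posSupp_mul hx (nnSupp_pow (nnSupp_of_pos hx) n)

theorem posSupp_iff_orderTop {x : HahnSeries Γ k} : PosSupp x ↔ 0 < x.orderTop := by
  constructor
  · intro h
    by_cases hx : x = 0
    · simp [hx]
    · rw [HahnSeries.orderTop_of_ne_zero hx]
      exact_mod_cast h _ (x.isWF_support.min_mem (HahnSeries.support_nonempty_iff.2 hx))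
  · intro h γ hγ
    have := HahnSeries.orderTop_le_of_coeff_ne_zero ((HahnSeries.mem_support _ _).1 hγ)
    exact_mod_cast lt_of_lt_of_le h this

theorem support_smul_subset' (c : k) (x : HahnSeries Γ k) :
    (c • x).support ⊆ x.support := by
  intro γ hγ
  rw [HahnSeries.mem_support, HahnSeries.coeff_smul] at hγ
  exact (HahnSeries.mem_support _ _).2 (right_ne_zero_of_smul hγ)

/-- pointwise scalar rescaling of a summable family -/
def smulFam {α : Type*} (c : α → k) (s : SummableFamily Γ k α) : SummableFamily Γ k α where
  toFun a := c a • s a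
  isPWO_iUnion_support' := s.isPWO_iUnion_support.mono
    (Set.iUnion_mono fun a => support_smul_subset' _ _)
  finite_co_support' g := (s.finite_co_support' g).subset (fun a ha => by
    simp only [Function.mem_support, HahnSeries.coeff_smul] at ha ⊢
    exact right_ne_zero_of_smul ha)

@[simp] theorem smulFam_apply {α : Type*} (c : α → k) (s : SummableFamily Γ k α) (a : α) :
    smulFam c s a = c a • s a := rfl

theorem hsum_smulFam_const {α : Type*} (c : k) (s : SummableFamily Γ k α) :
    (smulFam (fun _ => c) s).hsum = c • s.hsum := by
  ext g
  rw [HahnSeries.coeff_smul, coeff_hsum, coeff_hsum,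
    finsum_congr (fun a : α => by
      rw [smulFam_apply, HahnSeries.coeff_smul] :
      ∀ a : α, ((smulFam (fun _ => c) s) a).coeff g = c • (s a).coeff g),
    smul_finsum]

/-- hsum of a family supported on a finset -/
theorem hsum_eq_sum_of_support {α : Type*} (s : SummableFamily Γ k α) (F : Finset α)
    (h : ∀ a ∉ F, s a = 0) : s.hsum = ∑ a ∈ F, s a := by
  ext g
  have hc : (∑ a ∈ F, s a).coeff g = ∑ a ∈ F, (s a).coeff g :=
    map_sum (AddMonoidHom.mk' (fun x : HahnSeries Γ k => x.coeff g)
      (fun a b => HahnSeries.coeff_add)) _ _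
  rw [coeff_hsum, hc]
  refine finsum_eq_sum_of_support_subset _ ?_
  intro a ha
  simp only [Function.mem_support] at ha
  by_contra hF
  rw [h a hF] at ha
  simp at ha

section Curry

variable {α β : Type*}

/-- a row of a two-index summable family -/
def rowFam (s : SummableFamily Γ k (α × β)) (a : α) : SummableFamily Γ k β where
  toFun b := s (a, b)
  isPWO_iUnion_support' := s.isPWO_iUnion_support.mono
    (Set.iUnion_subset fun b => Set.subset_iUnion (fun p : α × β => (s p).support) (a, b))
  finite_co_support' g := ((s.finite_co_support' g).preimage
    (Set.injOn_of_injective (fun b₁ b₂ h => by simpa using congrArg Prod.snd h)))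

@[simp] theorem rowFam_apply (s : SummableFamily Γ k (α × β)) (a : α) (b : β) :
    rowFam s a b = s (a, b) := rfl

/-- currying a two-index summable family -/
def curryFam (s : SummableFamily Γ k (α × β)) : SummableFamily Γ k α where
  toFun a := (rowFam s a).hsum
  isPWO_iUnion_support' := s.isPWO_iUnion_support.mono
    (Set.iUnion_subset fun a => (support_hsum_subset).trans
      (Set.iUnion_subset fun b => Set.subset_iUnion (fun p : α × β => (s p).support) (a, b)))
  finite_co_support' g := by
    refine ((s.finite_co_support' g).image Prod.fst).subset ?_
    intro a ha
    simp only [Function.mem_support, coeff_hsum] at ha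
    have : ∃ b, (s (a, b)).coeff g ≠ 0 := by
      by_contra hb
      push_neg at hb
      exact ha (finsum_eq_zero_of_forall_eq_zero fun b => hb b)
    obtain ⟨b, hb⟩ := this
    exact ⟨(a, b), hb, rfl⟩

@[simp] theorem curryFam_apply (s : SummableFamily Γ k (α × β)) (a : α) :
    curryFam s a = (rowFam s a).hsum := rfl

theorem hsum_curryFam (s : SummableFamily Γ k (α × β)) : (curryFam s).hsum = s.hsum := by
  ext g
  rw [coeff_hsum, coeff_hsum]
  have : ∀ a, (curryFam s a).coeff g = ∑ᶠ b, (s (a, b)).coeff g := fun a => coeff_hsum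
  rw [finsum_congr this]
  exact (finsum_curry _ (s.finite_co_support g)).symm

/-- regrouping a two-index family along antidiagonals -/
theorem hsum_of_antidiagonal (s : SummableFamily Γ k (ℕ × ℕ)) (t : SummableFamily Γ k ℕ)
    (ht : ∀ n, t n = ∑ p ∈ Finset.HasAntidiagonal.antidiagonal n, s p) : t.hsum = s.hsum := by
  have einj : Function.Injective (fun p : ℕ × ℕ => (p.1 + p.2, p.1)) := by
    intro p q h
    simp only [Prod.mk.injEq] at h
    obtain ⟨h1, h2⟩ := h
    exact Prod.ext h2 (by omega)
  set e : ℕ × ℕ ↪ ℕ × ℕ := ⟨fun p => (p.1 + p.2, p.1), einj⟩ with he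
  have key : t = curryFam (s.embDomain e) := by
    apply SummableFamily.ext
    intro n
    rw [ht n, curryFam_apply]
    rw [hsum_eq_sum_of_support _ (Finset.range (n + 1)) ?side]
    case side =>
      intro b hb
      rw [Finset.mem_range, not_lt] at hb
      rw [rowFam_apply]
      apply SummableFamily.embDomain_notin_range
      rintro ⟨p, hp⟩
      simp only [he, Function.Embedding.coeFn_mk, Prod.mk.injEq] at hp
      omega
    rw [Finset.Nat.sum_antidiagonal_eq_sum_range_succ_mk]
    refine Finset.sum_congr rfl fun b hb => ?_
    rw [Finset.mem_range] at hb
    have hb' : b ≤ n := by omega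
    have : e (b, n - b) = (n, b) := by
      simp only [he, Function.Embedding.coeFn_mk]
      rw [Nat.add_sub_cancel' hb']
    rw [rowFam_apply, ← this, SummableFamily.embDomain_image]
  rw [key, hsum_curryFam, hsum_embDomain]

end Curry
section Phi

variable {k : Type*} [Field k] [LinearOrder k] [IsStrictOrderedRing k] {Γ : Type*} [AddCommMonoid Γ] [LinearOrder Γ] [IsOrderedCancelAddMonoid Γ]

open PowerSeries

/-- the family `n ↦ (coeff n f) • x^n` -/
def phiFam (f : PowerSeries k) (x : HahnSeries Γ k) (hx : 0 < x.orderTop) :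
    SummableFamily Γ k ℕ :=
  smulFam (fun n => PowerSeries.coeff (R := k) n f) (powers x)

theorem phiFam_apply (f : PowerSeries k) (x : HahnSeries Γ k) (hx : 0 < x.orderTop) (n : ℕ) :
    phiFam f x hx n = PowerSeries.coeff (R := k) n f • x ^ n := by
  show PowerSeries.coeff (R := k) n f • powers x n = _
  rw [powers_of_orderTop_pos hx]

/-- evaluation of a power series at a Hahn series of positive `orderTop` -/
def phi (f : PowerSeries k) (x : HahnSeries Γ k) (hx : 0 < x.orderTop) : HahnSeries Γ k :=
  (phiFam f x hx).hsum

theorem phi_add (f g : PowerSeries k) (x : HahnSeries Γ k) (hx : 0 < x.orderTop) :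
    phi (f + g) x hx = phi f x hx + phi g x hx := by
  rw [phi, phi, phi, ← hsum_add]
  congr 1
  apply SummableFamily.ext
  intro n
  rw [SummableFamily.add_apply, phiFam_apply, phiFam_apply, phiFam_apply, map_add, add_smul]

theorem phi_one (x : HahnSeries Γ k) (hx : 0 < x.orderTop) : phi 1 x hx = 1 := by
  rw [phi, hsum_eq_sum_of_support _ {0} ?side]
  case side =>
    intro n hn
    rw [phiFam_apply, PowerSeries.coeff_one, if_neg (by simpa using hn), zero_smul]
  rw [Finset.sum_singleton, phiFam_apply, PowerSeries.coeff_one, if_pos rfl, pow_zero, one_smul]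

theorem phi_mul (f g : PowerSeries k) (x : HahnSeries Γ k) (hx : 0 < x.orderTop) :
    phi (f * g) x hx = phi f x hx * phi g x hx := by
  have hprod : phi f x hx * phi g x hx = (SummableFamily.mul (phiFam f x hx) (phiFam g x hx)).hsum := by
    rw [hsum_mul]; rfl
  rw [hprod, phi]
  apply hsum_of_antidiagonal
  intro n
  rw [phiFam_apply, PowerSeries.coeff_mul, Finset.sum_smul]
  refine Finset.sum_congr rfl fun p hp => ?_
  rw [Finset.HasAntidiagonal.mem_antidiagonal] at hp
  have : (SummableFamily.mul (phiFam f x hx) (phiFam g x hx)) p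
      = (phiFam f x hx p.1) * (phiFam g x hx p.2) := by
    rw [SummableFamily.mul_toFun]
  rw [this, phiFam_apply, phiFam_apply, smul_mul_smul_comm, ← _root_.pow_add, hp]

theorem phi_pow (g : PowerSeries k) (x : HahnSeries Γ k) (hx : 0 < x.orderTop) (n : ℕ) :
    phi (g ^ n) x hx = (phi g x hx) ^ n := by
  induction n with
  | zero => simpa using phi_one x hx
  | succ m ih => rw [pow_succ, pow_succ, phi_mul, ih]

theorem posSupp_phi {f : PowerSeries k} (hf : PowerSeries.constantCoeff (R := k) f = 0)
    (x : HahnSeries Γ k) (hx : 0 < x.orderTop) : PosSupp (phi f x hx) := by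
  intro γ hγ
  have := support_hsum_subset hγ
  rw [Set.mem_iUnion] at this
  obtain ⟨n, hn⟩ := this
  rw [phiFam_apply] at hn
  cases n with
  | zero =>
    rw [PowerSeries.coeff_zero_eq_constantCoeff, hf, zero_smul] at hn
    simp at hn
  | succ m =>
    exact posSupp_pow (posSupp_iff_orderTop.2 hx) m γ (support_smul_subset' _ _ hn)

theorem coeff_pow_eq_zero {g : PowerSeries k} (hg : PowerSeries.constantCoeff (R := k) g = 0)
    {m n : ℕ} (hmn : m < n) : PowerSeries.coeff (R := k) m (g ^ n) = 0 := by
  have : (PowerSeries.X : PowerSeries k) ^ n ∣ g ^ n :=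
    pow_dvd_pow_of_dvd (PowerSeries.X_dvd_iff.2 hg) n
  exact (PowerSeries.X_pow_dvd_iff.1 this) m hmn

/-- formal composition of power series (assuming the inner one has zero constant term) -/
def pcomp (f g : PowerSeries k) : PowerSeries k :=
  PowerSeries.mk fun m =>
    ∑ n ∈ Finset.range (m + 1), PowerSeries.coeff (R := k) n f * PowerSeries.coeff (R := k) m (g ^ n)

/-- the two-index substitution family -/
def substFam (f g : PowerSeries k) (x : HahnSeries Γ k) (hx : 0 < x.orderTop)
    (hg : PowerSeries.constantCoeff (R := k) g = 0) : SummableFamily Γ k (ℕ × ℕ) where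
  toFun p := (PowerSeries.coeff (R := k) p.2 f * PowerSeries.coeff (R := k) p.1 (g ^ p.2)) • x ^ p.1
  isPWO_iUnion_support' := (powers x).isPWO_iUnion_support.mono (by
    refine Set.iUnion_subset fun p => ?_
    refine (support_smul_subset' _ _).trans ?_
    intro γ hγ
    rw [Set.mem_iUnion]
    exact ⟨p.1, by rwa [powers_of_orderTop_pos hx]⟩)
  finite_co_support' γ := by
    have hM : {m : ℕ | (x ^ m).coeff γ ≠ 0}.Finite := by
      exact ((powers x).finite_co_support' γ).subset fun m hm => by
          show (powers x m).coeff γ ≠ 0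
          rwa [powers_of_orderTop_pos hx]
    refine (Set.Finite.biUnion hM (fun m _ =>
      (Set.finite_singleton m |>.prod (Set.finite_Iic m)))).subset ?_
    intro p hp
    have hp' : (PowerSeries.coeff (R := k) p.2 f * PowerSeries.coeff (R := k) p.1 (g ^ p.2)) •
        (x ^ p.1).coeff γ ≠ 0 := by
      simpa [HahnSeries.coeff_smul] using hp
    have h1 : (x ^ p.1).coeff γ ≠ 0 := right_ne_zero_of_smul hp'
    have h2 : PowerSeries.coeff (R := k) p.2 f * PowerSeries.coeff (R := k) p.1 (g ^ p.2) ≠ 0 :=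
      left_ne_zero_of_smul hp'
    have h3 : p.2 ≤ p.1 := by
      by_contra hc
      exact h2 (by rw [coeff_pow_eq_zero hg (by omega), mul_zero])
    exact Set.mem_biUnion h1 (by exact ⟨rfl, h3⟩)

theorem hsum_substFam_eq_pcomp (f g : PowerSeries k) (x : HahnSeries Γ k) (hx : 0 < x.orderTop)
    (hg : PowerSeries.constantCoeff (R := k) g = 0) :
    (substFam f g x hx hg).hsum = phi (pcomp f g) x hx := by
  rw [phi]
  rw [← hsum_curryFam]
  congr 1
  apply SummableFamily.ext
  intro m
  rw [curryFam_apply, phiFam_apply]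
  rw [hsum_eq_sum_of_support _ (Finset.range (m + 1)) ?side]
  case side =>
    intro n hn
    rw [Finset.mem_range, not_lt] at hn
    show (PowerSeries.coeff (R := k) n f * PowerSeries.coeff (R := k) m (g ^ n)) • x ^ m = 0
    rcases Nat.lt_or_ge m n with h | h
    · rw [coeff_pow_eq_zero hg h, mul_zero, zero_smul]
    · omega
  rw [pcomp, PowerSeries.coeff_mk, Finset.sum_smul]
  rfl

theorem hsum_substFam_eq_phi (f g : PowerSeries k) (x : HahnSeries Γ k) (hx : 0 < x.orderTop)
    (hg : PowerSeries.constantCoeff (R := k) g = 0)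
    (hy : 0 < (phi g x hx).orderTop) :
    (substFam f g x hx hg).hsum = phi f (phi g x hx) hy := by
  rw [← hsum_equiv (Equiv.prodComm ℕ ℕ) (substFam f g x hx hg), phi, ← hsum_curryFam]
  congr 1
  apply SummableFamily.ext
  intro n
  rw [curryFam_apply, phiFam_apply]
  have hrow : rowFam (SummableFamily.Equiv (Equiv.prodComm ℕ ℕ) (substFam f g x hx hg)) n
      = smulFam (fun _ => PowerSeries.coeff (R := k) n f) (phiFam (g ^ n) x hx) := by
    apply SummableFamily.ext
    intro m
    rw [rowFam_apply, smulFam_apply, phiFam_apply]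
    show (substFam f g x hx hg) ((Equiv.prodComm ℕ ℕ).symm (n, m)) = _
    show (PowerSeries.coeff (R := k) n f * PowerSeries.coeff (R := k) m (g ^ n)) • x ^ m = _
    rw [mul_smul]
  rw [hrow, hsum_smulFam_const, ← phi, phi_pow]

/-- the substitution theorem -/
theorem phi_phi (f g : PowerSeries k) (x : HahnSeries Γ k) (hx : 0 < x.orderTop)
    (hg : PowerSeries.constantCoeff (R := k) g = 0) (hy : 0 < (phi g x hx).orderTop) :
    phi f (phi g x hx) hy = phi (pcomp f g) x hx := by
  rw [← hsum_substFam_eq_phi f g x hx hg hy, hsum_substFam_eq_pcomp]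

end Phi
section PSeries

variable {k : Type*} [Field k] [LinearOrder k] [IsStrictOrderedRing k]

open PowerSeries

/-- the exponential series -/
def Eser : PowerSeries k := PowerSeries.mk fun n => (n.factorial : k)⁻¹

/-- the logarithm series `log (1 + X)` -/
def Lser : PowerSeries k := PowerSeries.mk fun n => if n = 0 then 0 else (-1) ^ (n - 1) / (n : k)

theorem coeff_Eser (n : ℕ) : PowerSeries.coeff (R := k) n Eser = (n.factorial : k)⁻¹ :=
  PowerSeries.coeff_mk _ _

theorem coeff_Lser (n : ℕ) :
    PowerSeries.coeff (R := k) n Lser = if n = 0 then 0 else (-1) ^ (n - 1) / (n : k) :=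
  PowerSeries.coeff_mk _ _

theorem constantCoeff_Lser : PowerSeries.constantCoeff (R := k) Lser = 0 := by
  rw [← PowerSeries.coeff_zero_eq_constantCoeff_apply, coeff_Lser]
  simp

theorem coeff_one_Eser : PowerSeries.coeff (R := k) 1 Eser = 1 := by
  rw [coeff_Eser]; simp

theorem coeff_one_Lser : PowerSeries.coeff (R := k) 1 Lser = 1 := by
  rw [coeff_Lser]; simp

theorem coeff_dL (i : ℕ) : PowerSeries.coeff (R := k) i (PowerSeries.derivative k Lser) = (-1) ^ i := by
  rw [PowerSeries.coeff_derivative, coeff_Lser]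
  have h1 : ((i : k) + 1) ≠ 0 := Nat.cast_add_one_ne_zero i
  simp only [Nat.succ_ne_zero, if_false, Nat.add_sub_cancel]
  push_cast
  field_simp

theorem Eser_succ_mul (n : ℕ) :
    PowerSeries.coeff (R := k) (n + 1) Eser * ((n : k) + 1) = PowerSeries.coeff (R := k) n Eser := by
  rw [coeff_Eser, coeff_Eser, Nat.factorial_succ]
  have h0 : ((n.factorial : k)) ≠ 0 := Nat.cast_ne_zero.2 n.factorial_ne_zero
  have h1 : ((n : k) + 1) ≠ 0 := Nat.cast_add_one_ne_zero n
  push_cast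
  field_simp

/-- coefficients of the composite series -/
def ucoef (m : ℕ) : k := PowerSeries.coeff (R := k) m (pcomp Eser Lser)

theorem ucoef_eq (m : ℕ) :
    ucoef m = ∑ n ∈ Finset.range (m + 1),
      PowerSeries.coeff (R := k) n Eser * PowerSeries.coeff (R := k) m (Lser ^ n) := by
  rw [ucoef, pcomp, PowerSeries.coeff_mk]

theorem ucoef_eq_sum {m N : ℕ} (h : m + 1 ≤ N) :
    ∑ n ∈ Finset.range N, PowerSeries.coeff (R := k) n Eser * PowerSeries.coeff (R := k) m (Lser ^ n)
      = ucoef m := by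
  rw [ucoef_eq]
  refine (Finset.sum_subset (Finset.range_subset_range.2 h) ?_).symm
  intro n hn hn'
  rw [Finset.mem_range] at hn hn'
  rw [coeff_pow_eq_zero constantCoeff_Lser (by omega), mul_zero]

theorem ucoef_zero : ucoef (k := k) 0 = 1 := by
  rw [ucoef_eq]
  simp [coeff_Eser]

theorem ucoef_recur (m : ℕ) :
    ((m : k) + 1) * ucoef (m + 1)
      = ∑ i ∈ Finset.range (m + 1), (-1) ^ (m - i) * ucoef i := by
  have step1 : ((m : k) + 1) * ucoef (m + 1)
      = ∑ n ∈ Finset.range (m + 2), PowerSeries.coeff (R := k) n Eser *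
          PowerSeries.coeff (R := k) m (PowerSeries.derivative k (Lser ^ n)) := by
    rw [← ucoef_eq_sum (le_refl (m + 2)), Finset.mul_sum]
    refine Finset.sum_congr rfl fun n _ => ?_
    rw [PowerSeries.coeff_derivative]
    ring
  rw [step1, Finset.sum_range_succ']
  have hzero : PowerSeries.coeff (R := k) 0 Eser *
      PowerSeries.coeff (R := k) m (PowerSeries.derivative k (Lser ^ 0)) = 0 := by
    rw [pow_zero, Derivation.map_one_eq_zero]
    simp
  rw [hzero, add_zero]
  have step2 : ∀ j ∈ Finset.range (m + 1),
      PowerSeries.coeff (R := k) (j + 1) Eser *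
        PowerSeries.coeff (R := k) m (PowerSeries.derivative k (Lser ^ (j + 1)))
      = PowerSeries.coeff (R := k) j Eser *
          PowerSeries.coeff (R := k) m (Lser ^ j * PowerSeries.derivative k Lser) := by
    intro j _
    rw [Derivation.leibniz_pow, Nat.add_sub_cancel, smul_eq_mul (α := PowerSeries k),
      map_nsmul, nsmul_eq_mul]
    push_cast
    rw [← Eser_succ_mul j]
    ring
  rw [Finset.sum_congr rfl step2]
  have step3 : ∀ j, PowerSeries.coeff (R := k) m (Lser ^ j * PowerSeries.derivative k Lser)
      = ∑ p ∈ Finset.HasAntidiagonal.antidiagonal m,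
          PowerSeries.coeff (R := k) p.1 (Lser ^ j) * (-1 : k) ^ p.2 := by
    intro j
    rw [PowerSeries.coeff_mul]
    exact Finset.sum_congr rfl fun p _ => by rw [coeff_dL]
  rw [Finset.sum_congr rfl fun j _ => by rw [step3 j]]
  simp_rw [Finset.mul_sum]
  rw [Finset.sum_comm]
  have step4 : ∀ p ∈ Finset.HasAntidiagonal.antidiagonal m,
      ∑ j ∈ Finset.range (m + 1),
        PowerSeries.coeff (R := k) j Eser * (PowerSeries.coeff (R := k) p.1 (Lser ^ j) * (-1 : k) ^ p.2)
      = (-1 : k) ^ p.2 * ucoef p.1 := by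
    intro p hp
    rw [Finset.HasAntidiagonal.mem_antidiagonal] at hp
    have hle : p.1 + 1 ≤ m + 1 := by omega
    rw [← ucoef_eq_sum hle, Finset.mul_sum]
    exact Finset.sum_congr rfl fun j _ => by ring
  rw [Finset.sum_congr rfl step4, Finset.Nat.sum_antidiagonal_eq_sum_range_succ_mk]

theorem ucoef_one : ucoef (k := k) 1 = 1 := by
  have := ucoef_recur (k := k) 0
  simpa [ucoef_zero] using this

theorem ucoef_step (m : ℕ) :
    ((m : k) + 2) * ucoef (m + 2) = -(m : k) * ucoef (m + 1) := by
  have h2 := ucoef_recur (k := k) m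
  have h1 := ucoef_recur (k := k) (m + 1)
  rw [Finset.sum_range_succ] at h1
  have hsh : ∑ i ∈ Finset.range (m + 1), ((-1 : k)) ^ (m + 1 - i) * ucoef i
      = -∑ i ∈ Finset.range (m + 1), ((-1 : k)) ^ (m - i) * ucoef i := by
    rw [← Finset.sum_neg_distrib]
    refine Finset.sum_congr rfl fun i hi => ?_
    rw [Finset.mem_range] at hi
    rw [show m + 1 - i = (m - i) + 1 by omega, pow_succ]
    ring
  rw [hsh, ← h2, Nat.sub_self, pow_zero, one_mul] at h1
  have e1 : m + 1 + 1 = m + 2 := rfl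
  rw [e1] at h1
  push_cast at h1 ⊢
  linear_combination h1

theorem ucoef_vanish (m : ℕ) : ucoef (k := k) (m + 2) = 0 := by
  induction m with
  | zero =>
    have h := ucoef_step (k := k) 0
    have e1 : (0 : ℕ) + 2 = 2 := rfl
    have e2 : (0 : ℕ) + 1 = 1 := rfl
    rw [e1, e2] at h
    push_cast at h
    rw [neg_zero, zero_mul] at h
    have h2 : ((0 : k) + 2) ≠ 0 := by norm_num
    exact (mul_eq_zero.1 h).resolve_left h2
  | succ n ih =>
    have h := ucoef_step (k := k) (n + 1)
    have e1 : n + 1 + 2 = n + 3 := rfl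
    have e2 : n + 1 + 1 = n + 2 := rfl
    rw [e1, e2, ih, mul_zero] at h
    have hne : ((n : k) + 1 + 2) ≠ 0 := by
      have e3 : ((n : k) + 1 + 2) = ((n + 3 : ℕ) : k) := by push_cast; ring
      rw [e3]
      exact Nat.cast_ne_zero.2 (by omega)
    push_cast at h
    show ucoef (n + 3) = 0
    exact (mul_eq_zero.1 h).resolve_left hne

theorem pcomp_Eser_Lser : pcomp (Eser : PowerSeries k) Lser = 1 + PowerSeries.X := by
  ext m
  rw [show (PowerSeries.coeff (R := k) m) (pcomp Eser Lser) = ucoef m from rfl]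
  match m with
  | 0 => simp [ucoef_zero]
  | 1 => simp [ucoef_one]
  | (n + 2) =>
    rw [ucoef_vanish]
    rw [map_add, PowerSeries.coeff_one, PowerSeries.coeff_X]
    simp

end PSeries

section Order

variable {k : Type*} [Field k] [LinearOrder k] [IsStrictOrderedRing k] {Γ : Type*} [AddCommMonoid Γ] [LinearOrder Γ] [IsOrderedCancelAddMonoid Γ]

theorem posSupp_add {x y : HahnSeries Γ k} (hx : PosSupp x) (hy : PosSupp y) :
    PosSupp (x + y) := fun γ hγ =>
  (HahnSeries.support_add_subset _ _ hγ).elim (hx γ) (hy γ)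

theorem posSupp_finsetSum {ι : Type*} {s : Finset ι} {f : ι → HahnSeries Γ k}
    (h : ∀ i ∈ s, PosSupp (f i)) : PosSupp (∑ i ∈ s, f i) := by
  intro γ hγ
  rw [HahnSeries.mem_support] at hγ
  have hc : (∑ i ∈ s, f i).coeff γ = ∑ i ∈ s, (f i).coeff γ :=
    map_sum (AddMonoidHom.mk' (fun x : HahnSeries Γ k => x.coeff γ)
      (fun a b => HahnSeries.coeff_add)) _ _
  rw [hc] at hγ
  obtain ⟨i, hi, hne⟩ := Finset.exists_ne_zero_of_sum_ne_zero hγ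
  exact h i hi γ ((HahnSeries.mem_support _ _).2 hne)

theorem posSupp_pow_mul_pow {x y : HahnSeries Γ k} (hx : PosSupp x) (hy : PosSupp y)
    {i j : ℕ} (hij : 1 ≤ i + j) : PosSupp (y ^ i * x ^ j) := by
  cases i with
  | zero =>
    rw [pow_zero, one_mul]
    match j, hij with
    | (m + 1), _ => exact posSupp_pow hx m
  | succ m => exact posSupp_mul (posSupp_pow hy m) (nnSupp_pow (nnSupp_of_pos hx) j)

/-- strict monotonicity of evaluation of a power series with linear coefficient 1,
formulated via leading coefficients -/
theorem phi_lt_phi (f : PowerSeries k) (hf1 : PowerSeries.coeff (R := k) 1 f = 1)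
    {x y : HahnSeries Γ k} (hx : 0 < x.orderTop) (hy : 0 < y.orderTop)
    (hlc : 0 < (y - x).leadingCoeff) :
    0 < (phi f y hy - phi f x hx).leadingCoeff := by
  have hd0 : y - x ≠ 0 := by
    intro h
    rw [h] at hlc
    simp at hlc
  set d := y - x with hdd
  set g0 := d.isWF_support.min (HahnSeries.support_nonempty_iff.2 hd0) with hg0
  have hdmin : ∀ γ ∈ d.support, g0 ≤ γ := fun γ hγ => Set.IsWF.min_le _ _ hγ
  have hdlc : d.leadingCoeff = d.coeff g0 := HahnSeries.leadingCoeff_of_ne hd0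
  set D := phiFam f y hy - phiFam f x hx with hD
  have hDn : ∀ n, D n = PowerSeries.coeff (R := k) n f • (y ^ n - x ^ n) := by
    intro n
    rw [hD, SummableFamily.sub_apply, phiFam_apply, phiFam_apply, smul_sub]
  have hΔ : phi f y hy - phi f x hx = D.hsum := by
    rw [hD, SummableFamily.hsum_sub, phi, phi]
  have hpx : PosSupp x := posSupp_iff_orderTop.2 hx
  have hpy : PosSupp y := posSupp_iff_orderTop.2 hy
  have htail : ∀ n, n ≠ 1 → ∀ γ ∈ (D n).support, g0 < γ := by
    intro n hn γ hγ
    match n, hn with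
    | 0, _ =>
      rw [hDn 0] at hγ
      simp at hγ
    | (m + 2), _ =>
      rw [hDn] at hγ
      have hγ' := support_smul_subset' _ _ hγ
      have hfac : y ^ (m + 2) - x ^ (m + 2)
          = (∑ i ∈ Finset.range (m + 2), y ^ i * x ^ (m + 2 - 1 - i)) * d := by
        rw [hdd]
        exact (geom_sum₂_mul y x (m + 2)).symm
      rw [hfac] at hγ'
      obtain ⟨a, ha, b, hb, rfl⟩ := HahnSeries.support_mul_subset hγ'
      have hapos : 0 < a := by
        refine posSupp_finsetSum (fun i hi => ?_) a ha
        rw [Finset.mem_range] at hi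
        exact posSupp_pow_mul_pow hpx hpy (i := i) (j := m + 2 - 1 - i) (by omega)
      calc g0 ≤ b := hdmin b hb
        _ < a + b := lt_add_of_pos_left b hapos
  have hcoeff : D.hsum.coeff g0 = d.coeff g0 := by
    rw [SummableFamily.coeff_hsum]
    rw [finsum_eq_single _ 1 ?h1]
    case h1 =>
      intro n hn
      by_contra hne
      exact lt_irrefl g0 (htail n hn g0 ((HahnSeries.mem_support _ _).2 hne))
    rw [hDn 1, pow_one, pow_one, hf1, one_smul]
  have hsupp : ∀ γ ∈ D.hsum.support, g0 ≤ γ := by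
    intro γ hγ
    obtain ⟨n, hn⟩ := Set.mem_iUnion.1 (SummableFamily.support_hsum_subset hγ)
    rcases eq_or_ne n 1 with rfl | hne
    · rw [hDn 1, pow_one, pow_one] at hn
      exact hdmin γ (support_smul_subset' _ _ hn)
    · exact le_of_lt (htail n hne γ hn)
  have hc0 : 0 < D.hsum.coeff g0 := by
    rw [hcoeff, ← hdlc]
    exact hlc
  have hne : D.hsum ≠ 0 := by
    intro h
    rw [h] at hc0
    simp at hc0
  have hminD : D.hsum.isWF_support.min (HahnSeries.support_nonempty_iff.2 hne) = g0 := by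
    apply le_antisymm
    · exact Set.IsWF.min_le _ _ ((HahnSeries.mem_support _ _).2 (ne_of_gt hc0))
    · exact hsupp _ (Set.IsWF.min_mem _ _)
  rw [hΔ, HahnSeries.leadingCoeff_of_ne hne, hminD]
  exact hc0

theorem Eser_binom {n i : ℕ} (h : i ≤ n) :
    PowerSeries.coeff (R := k) n Eser * ((n.choose i : ℕ) : k)
      = PowerSeries.coeff (R := k) i Eser * PowerSeries.coeff (R := k) (n - i) Eser := by
  rw [coeff_Eser, coeff_Eser, coeff_Eser]
  have h1 : (i.factorial : k) ≠ 0 := Nat.cast_ne_zero.2 (Nat.factorial_ne_zero i)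
  have h2 : ((n - i).factorial : k) ≠ 0 := Nat.cast_ne_zero.2 (Nat.factorial_ne_zero _)
  have h3 : (n.factorial : k) ≠ 0 := Nat.cast_ne_zero.2 (Nat.factorial_ne_zero n)
  have key : ((n.choose i : ℕ) : k) * (i.factorial : k) * ((n - i).factorial : k)
      = (n.factorial : k) := by
    exact_mod_cast congrArg (Nat.cast : ℕ → k) (Nat.choose_mul_factorial_mul_factorial h)
  field_simp
  linear_combination key

/-- the exponential takes sums to products -/
theorem phi_Eser_add (α β : HahnSeries Γ k) (hα : 0 < α.orderTop) (hβ : 0 < β.orderTop)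
    (hs : 0 < (α + β).orderTop) :
    phi Eser (α + β) hs = phi Eser α hα * phi Eser β hβ := by
  have hprod : phi Eser α hα * phi Eser β hβ
      = (SummableFamily.mul (phiFam Eser α hα) (phiFam Eser β hβ)).hsum := by
    rw [SummableFamily.hsum_mul]
    rfl
  rw [hprod, phi]
  apply hsum_of_antidiagonal
  intro n
  rw [phiFam_apply]
  have hterm : ∀ p ∈ Finset.HasAntidiagonal.antidiagonal n,
      (SummableFamily.mul (phiFam Eser α hα) (phiFam Eser β hβ)) p
        = (PowerSeries.coeff (R := k) p.1 Eser * PowerSeries.coeff (R := k) p.2 Eser)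
            • (α ^ p.1 * β ^ p.2) := by
    intro p _
    rw [SummableFamily.mul_toFun]
    rw [show (phiFam Eser α hα) p.1 = PowerSeries.coeff (R := k) p.1 Eser • α ^ p.1 from phiFam_apply _ _ _ _,
      show (phiFam Eser β hβ) p.2 = PowerSeries.coeff (R := k) p.2 Eser • β ^ p.2 from phiFam_apply _ _ _ _,
      smul_mul_smul_comm]
  rw [Finset.sum_congr rfl hterm, Finset.Nat.sum_antidiagonal_eq_sum_range_succ_mk, add_pow,
    Finset.smul_sum]
  refine Finset.sum_congr rfl fun i hi => ?_
  rw [Finset.mem_range] at hi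
  have hi' : i ≤ n := by omega
  rw [mul_comm (α ^ i * β ^ (n - i)) _, ← nsmul_eq_mul, ← Nat.cast_smul_eq_nsmul k, smul_smul,
    Eser_binom hi']

end Order

section Assemble

set_option maxHeartbeats 2000000

variable {k : Type*} [Field k] [LinearOrder k] [IsStrictOrderedRing k]

theorem phi_congr {Γ : Type*} [AddCommMonoid Γ] [LinearOrder Γ] [IsOrderedCancelAddMonoid Γ] (f : PowerSeries k)
    {x y : HahnSeries Γ k} (h : x = y) (hx : 0 < x.orderTop) (hy : 0 < y.orderTop) :
    phi f x hx = phi f y hy := by subst h; rfl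

theorem phi_X {Γ : Type*} [AddCommMonoid Γ] [LinearOrder Γ] [IsOrderedCancelAddMonoid Γ] (x : HahnSeries Γ k)
    (hx : 0 < x.orderTop) : phi PowerSeries.X x hx = x := by
  rw [phi, hsum_eq_sum_of_support _ {1} ?side]
  case side =>
    intro n hn
    rw [phiFam_apply, PowerSeries.coeff_X, if_neg (by simpa using hn), zero_smul]
  rw [Finset.sum_singleton, phiFam_apply, PowerSeries.coeff_X, if_pos rfl, pow_one, one_smul]

theorem exp_log'gen {Γ : Type*} [AddCommMonoid Γ] [LinearOrder Γ] [IsOrderedCancelAddMonoid Γ]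
    {ε : HahnSeries Γ k} (hε : 0 < ε.orderTop)
    (hl : 0 < (phi Lser ε hε).orderTop) :
    phi Eser (phi Lser ε hε) hl = 1 + ε := by
  rw [phi_phi Eser Lser ε hε constantCoeff_Lser hl, pcomp_Eser_Lser, phi_add, phi_one, phi_X]

theorem expE_injgen {Γ : Type*} [AddCommMonoid Γ] [LinearOrder Γ] [IsOrderedCancelAddMonoid Γ]
    {u v : HahnSeries Γ k} (hu : 0 < u.orderTop) (hv : 0 < v.orderTop)
    (h : phi Eser u hu = phi Eser v hv) : u = v := by
  by_contra hne
  have hd : v - u ≠ 0 := sub_ne_zero.2 (Ne.symm hne)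
  have hlc : (v - u).leadingCoeff ≠ 0 := HahnSeries.leadingCoeff_ne_zero.2 hd
  rcases lt_or_gt_of_ne hlc with hneg | hpos
  · have hpos' : 0 < (u - v).leadingCoeff := by
      rw [show u - v = -(v - u) from (neg_sub _ _).symm, hahn_leadingCoeff_neg]
      exact neg_pos.2 hneg
    have := phi_lt_phi Eser coeff_one_Eser hv hu hpos'
    rw [h, sub_self, HahnSeries.leadingCoeff_zero] at this
    exact lt_irrefl 0 this
  · have := phi_lt_phi Eser coeff_one_Eser hu hv hpos
    rw [h, sub_self, HahnSeries.leadingCoeff_zero] at this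
    exact lt_irrefl 0 this

variable {G : Type*} [CommGroup G] [LinearOrder G] [IsOrderedMonoid G]

theorem logOneUnit_eq {ε : HahnSeries (gdual G) k} (hε : 0 < ε.orderTop) :
    logOneUnit ε = phi Lser ε hε := by
  rw [logOneUnit, dif_pos hε, phi]
  have hfam : phiFam Lser ε hε
      = SummableFamily.embDomain (logFamily ε hε) ⟨Nat.succ, Nat.succ_injective⟩ := by
    apply SummableFamily.ext
    intro n
    cases n with
    | zero =>
      have h0 : ((logFamily ε hε).embDomain ⟨Nat.succ, Nat.succ_injective⟩) 0 = 0 :=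
        SummableFamily.embDomain_notin_range _ _ (by rintro ⟨m, hm⟩; exact Nat.succ_ne_zero m hm)
      rw [h0, phiFam_apply, coeff_Lser, if_pos rfl, zero_smul]
    | succ m =>
      have h0 : ((logFamily ε hε).embDomain ⟨Nat.succ, Nat.succ_injective⟩) (m + 1)
          = logFamily ε hε m :=
        SummableFamily.embDomain_image _ _
      rw [h0, phiFam_apply, coeff_Lser, if_neg (Nat.succ_ne_zero m)]
      show _ = ((-1 : k) ^ m / ((m : k) + 1)) • ε ^ (m + 1)
      congr 1
      rw [Nat.succ_sub_one]
      push_cast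
      ring
  rw [hfam, SummableFamily.hsum_embDomain]

end Assemble

end AuxLog

/-- The logarithm on 1-units is a well-defined order-preserving group
isomorphism from the multiplicative group `1 + k((G^{<1}))` onto the additive group
`(k((G^{<1})), +)`.  Here `ε ∈ k((G^{<1}))` is expressed as `0 < ε.orderTop` (the support of
`ε` is contained in `G^{<1}`).  The four conjuncts state: the series
`Σ_{i≥1} (-1)^(i-1) ε^i/i` has (anti well-ordered) support contained in `G^{<1}`; the map
`1+ε ↦ Σ_{i≥1} (-1)^(i-1) ε^i/i` sends products to sums (note
`(1+ε)(1+δ) = 1 + (ε+δ+εδ)`); it is strictly order-preserving (note `1+ε < 1+δ ↔ ε < δ`);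
and it is bijective onto `k((G^{<1}))`. -/
theorem logOneUnit_orderIso {k : Type*} [Field k] [LinearOrder k] [IsStrictOrderedRing k]
    {G : Type*} [CommGroup G] [LinearOrder G] [IsOrderedMonoid G] :
    (∀ ε : HahnSeries (gdual G) k, 0 < ε.orderTop →
      ∀ γ ∈ (logOneUnit ε).support, (0 : gdual G) < γ) ∧
    (∀ ε δ : HahnSeries (gdual G) k, 0 < ε.orderTop → 0 < δ.orderTop →
      logOneUnit (ε + δ + ε * δ) = logOneUnit ε + logOneUnit δ) ∧
    (∀ ε δ : HahnSeries (gdual G) k, 0 < ε.orderTop → 0 < δ.orderTop →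
      ε < δ → logOneUnit ε < logOneUnit δ) ∧
    (∀ β : HahnSeries (gdual G) k, 0 < β.orderTop →
      ∃! ε : HahnSeries (gdual G) k, 0 < ε.orderTop ∧ logOneUnit ε = β) := by
  have conj1 : ∀ ε : HahnSeries (gdual G) k, 0 < ε.orderTop →
      ∀ γ ∈ (logOneUnit ε).support, (0 : gdual G) < γ := by
    intro ε hε γ hγ
    rw [AuxLog.logOneUnit_eq hε] at hγ
    exact AuxLog.posSupp_phi AuxLog.constantCoeff_Lser ε hε γ hγ
  have hlogpos : ∀ (ε : HahnSeries (gdual G) k) (hε : 0 < ε.orderTop),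
      0 < (logOneUnit ε).orderTop := fun ε hε =>
    AuxLog.posSupp_iff_orderTop.1 (conj1 ε hε)
  have H1 : ∀ (ε : HahnSeries (gdual G) k) (hε : 0 < ε.orderTop),
      AuxLog.phi AuxLog.Eser (logOneUnit ε) (hlogpos ε hε) = 1 + ε := by
    intro ε hε
    have hy' : 0 < (AuxLog.phi AuxLog.Lser ε hε).orderTop := by
      rw [← AuxLog.logOneUnit_eq hε]
      exact hlogpos ε hε
    rw [AuxLog.phi_congr AuxLog.Eser (AuxLog.logOneUnit_eq hε) (hlogpos ε hε) hy']
    exact AuxLog.exp_log'gen hε hy'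
  have conj3 : ∀ ε δ : HahnSeries (gdual G) k, 0 < ε.orderTop → 0 < δ.orderTop →
      ε < δ → logOneUnit ε < logOneUnit δ := by
    intro ε δ hε hδ h
    rw [hahn_lt_iff]
    rw [AuxLog.logOneUnit_eq hε, AuxLog.logOneUnit_eq hδ]
    exact AuxLog.phi_lt_phi AuxLog.Lser AuxLog.coeff_one_Lser hε hδ ((hahn_lt_iff ε δ).1 h)
  have conj2 : ∀ ε δ : HahnSeries (gdual G) k, 0 < ε.orderTop → 0 < δ.orderTop →
      logOneUnit (ε + δ + ε * δ) = logOneUnit ε + logOneUnit δ := by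
    intro ε δ hε hδ
    have pε := AuxLog.posSupp_iff_orderTop.2 hε
    have pδ := AuxLog.posSupp_iff_orderTop.2 hδ
    have hεδ : 0 < (ε + δ + ε * δ).orderTop :=
      AuxLog.posSupp_iff_orderTop.1 (AuxLog.posSupp_add (AuxLog.posSupp_add pε pδ)
        (AuxLog.posSupp_mul pε (AuxLog.nnSupp_of_pos pδ)))
    have hab : 0 < (logOneUnit ε + logOneUnit δ).orderTop :=
      AuxLog.posSupp_iff_orderTop.1 (AuxLog.posSupp_add
        (AuxLog.posSupp_iff_orderTop.2 (hlogpos ε hε))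
        (AuxLog.posSupp_iff_orderTop.2 (hlogpos δ hδ)))
    have key : AuxLog.phi AuxLog.Eser (logOneUnit (ε + δ + ε * δ)) (hlogpos _ hεδ)
        = AuxLog.phi AuxLog.Eser (logOneUnit ε + logOneUnit δ) hab := by
      rw [H1 _ hεδ, AuxLog.phi_Eser_add _ _ (hlogpos ε hε) (hlogpos δ hδ) hab,
        H1 ε hε, H1 δ hδ]
      ring
    exact AuxLog.expE_injgen (hlogpos _ hεδ) hab key
  refine ⟨conj1, conj2, conj3, ?_⟩
  intro β hβ
  have hEm : PowerSeries.constantCoeff (R := k) (AuxLog.Eser - 1) = 0 := by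
    rw [map_sub, map_one, ← PowerSeries.coeff_zero_eq_constantCoeff_apply, AuxLog.coeff_Eser]
    simp
  set ε := AuxLog.phi (AuxLog.Eser - 1) β hβ with hεdef
  have hε : 0 < ε.orderTop :=
    AuxLog.posSupp_iff_orderTop.1 (AuxLog.posSupp_phi hEm β hβ)
  have hsplit : AuxLog.phi AuxLog.Eser β hβ = 1 + ε := by
    have h1 : (AuxLog.Eser : PowerSeries k) = 1 + (AuxLog.Eser - 1) := by ring
    rw [hεdef, ← AuxLog.phi_one β hβ, ← AuxLog.phi_add 1 (AuxLog.Eser - 1) β hβ]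
    exact congrArg (fun f => AuxLog.phi f β hβ) h1
  have hlog : logOneUnit ε = β := by
    apply AuxLog.expE_injgen (hlogpos ε hε) hβ
    rw [H1 ε hε, hsplit]
  refine ⟨ε, ⟨hε, hlog⟩, ?_⟩
  intro y hy
  by_contra hne
  have hd : ε - y ≠ 0 := sub_ne_zero.2 (Ne.symm hne)
  have hlc : (ε - y).leadingCoeff ≠ 0 := HahnSeries.leadingCoeff_ne_zero.2 hd
  rcases lt_or_gt_of_ne hlc with hneg | hpos
  · have hpos' : 0 < (y - ε).leadingCoeff := by
      rw [show y - ε = -(ε - y) from (neg_sub _ _).symm, hahn_leadingCoeff_neg]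
      exact neg_pos.2 hneg
    have := conj3 ε y hε hy.1 ((hahn_lt_iff ε y).2 hpos')
    rw [hy.2, hlog] at this
    exact absurd this (lt_irrefl β)
  · have := conj3 y ε hy.1 hε ((hahn_lt_iff y ε).2 hpos)
    rw [hy.2, hlog] at this
    exact absurd this (lt_irrefl β)

end
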